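/- For any graph G with minimum degree δ ≥ 1 and 1 ≤ k ≤ δ, the k-tuple total domination number satisfies γ_{×k,t}(G) ≥ γ_t(G) + k - 1, where γ_t is the total domination number. -/

import Mathlib

open SimpleGraph Finset

/-- For a graph `G` with minimum degree `δ ≥ 1` and `1 ≤ k ≤ δ`,
`γ_{×k,t}(G) ≥ γ_t(G) + k - 1`. -/
theorem kTupleTotalDomination_ge_totalDomination {V : Type*} [Fintype V] [DecidableEq V]
    (G : SimpleGraph V) [DecidableRel G.Adj] (k : ℕ)
    (hk1 : 1 ≤ k) (hkδ : k ≤ G.minDegree)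
    (a t : ℕ)
    (ha : IsLeast {m : ℕ | ∃ D : Finset V,
        (∀ v : V, k ≤ (G.neighborFinset v ∩ D).card) ∧ D.card = m} a)
    (ht : IsLeast {m : ℕ | ∃ D : Finset V,
        (∀ v : V, ∃ u ∈ D, G.Adj v u) ∧ D.card = m} t) :
    t + k - 1 ≤ a := by
  -- V is nonempty, else minDegree = 0 < k
  have hne : Nonempty V := by
    by_contra h
    have : IsEmpty V := not_nonempty_iff.mp h
    have : G.minDegree = 0 := by
      simp [SimpleGraph.minDegree, Finset.univ_eq_empty]
    omega
  obtain ⟨⟨D, hD, hDcard⟩, _⟩ := ha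
  obtain ⟨_, htmin⟩ := ht
  -- D has at least k elements
  obtain ⟨v⟩ := hne
  have hka : k ≤ a := by
    calc k ≤ (G.neighborFinset v ∩ D).card := hD v
    _ ≤ D.card := Finset.card_le_card (Finset.inter_subset_right)
    _ = a := hDcard
  -- remove k-1 vertices from D
  obtain ⟨S, hSD, hScard⟩ := Finset.exists_subset_card_eq (s := D) (n := k - 1)
    (by omega)
  have hdom : ∀ w : V, ∃ u ∈ D \ S, G.Adj w u := by
    intro w
    have h1 : k ≤ (G.neighborFinset w ∩ D).card := hD w
    have h2 : ((G.neighborFinset w ∩ D) ∩ S).card ≤ k - 1 := by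
      calc ((G.neighborFinset w ∩ D) ∩ S).card ≤ S.card :=
        Finset.card_le_card (Finset.inter_subset_right)
      _ = k - 1 := hScard
    have h3 : (G.neighborFinset w ∩ (D \ S)).Nonempty := by
      rw [← Finset.card_pos]
      have : G.neighborFinset w ∩ (D \ S) =
          (G.neighborFinset w ∩ D) \ ((G.neighborFinset w ∩ D) ∩ S) := by
        ext x
        simp only [Finset.mem_inter, Finset.mem_sdiff, Finset.mem_sdiff]
        tauto
      rw [this, Finset.card_sdiff_of_subset (Finset.inter_subset_left)]
      omega
    obtain ⟨u, hu⟩ := h3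
    simp only [Finset.mem_inter, SimpleGraph.mem_neighborFinset] at hu
    exact ⟨u, hu.2, hu.1⟩
  have hts : t ≤ (D \ S).card := htmin ⟨D \ S, hdom, rfl⟩
  have : (D \ S).card = a - (k - 1) := by
    rw [Finset.card_sdiff_of_subset hSD, hScard, hDcard]
  omega
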